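/- Let (M,μ) be a finite measure space, ι a countable index set, and (u_ξ)_{ξ∈ι}, (v_ξ)_{ξ∈ι} families in L²(μ) with ‖u_ξ‖_{L²}=1 for all ξ. Assume there is a constant ℓ > 0 such that ∑_{ξ∈ι} |∫_M f·\overline{v_ξ} dμ|² ≤ ℓ²·‖f‖_{L²}² for every f ∈ L²(μ). Then for all f, g ∈ L²(μ): ∑_{ξ∈ι} |(∫_M f·\overline{v_ξ} dμ)·(∫_M g·\overline{v_ξ} dμ)| · ‖u_ξ‖_{L¹(μ)} ≤ ℓ²·μ(M)^{1/2}·‖f‖_{L²}·‖g‖_{L²}; in particular the series f ∗_L g := ∑_{ξ∈ι} (∫_M f·\overline{v_ξ} dμ)·(∫_M g·\overline{v_ξ} dμ)·u_ξ converges absolutely in L¹(μ) and ‖f ∗_L g‖_{L¹(μ)} ≤ ℓ²·μ(M)^{1/2}·‖f‖_{L²}·‖g‖_{L²}. -/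

import Mathlib

open MeasureTheory
open scoped ENNReal

noncomputable section

/-- On a finite measure space, an element of `L²` is also in `L¹`; this is the corresponding
element of `L¹`. -/
def uL1 {M : Type*} [MeasurableSpace M] {μ : Measure M} [IsFiniteMeasure μ]
    (u : Lp ℂ 2 μ) : Lp ℂ 1 μ :=
  MemLp.toLp u ((Lp.memLp u).mono_exponent (by norm_num))

theorem statement_17
    {M : Type*} [MeasurableSpace M] {μ : Measure M} [IsFiniteMeasure μ]
    {ι : Type*} [Countable ι]
    (u v : ι → Lp ℂ 2 μ) (hu : ∀ ξ : ι, ‖u ξ‖ = 1)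
    (ℓ : ℝ) (hℓ : 0 < ℓ)
    (hbessel : ∀ f : Lp ℂ 2 μ,
      Summable (fun ξ => ‖∫ x, f x * (starRingEnd ℂ) (v ξ x) ∂μ‖ ^ 2) ∧
      ∑' ξ, ‖∫ x, f x * (starRingEnd ℂ) (v ξ x) ∂μ‖ ^ 2 ≤ ℓ ^ 2 * ‖f‖ ^ 2) :
    ∀ f g : Lp ℂ 2 μ,
      Summable (fun ξ =>
        ‖(∫ x, f x * (starRingEnd ℂ) (v ξ x) ∂μ) * (∫ x, g x * (starRingEnd ℂ) (v ξ x) ∂μ)‖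
          * (eLpNorm (u ξ) 1 μ).toReal) ∧
      (∑' ξ,
        ‖(∫ x, f x * (starRingEnd ℂ) (v ξ x) ∂μ) * (∫ x, g x * (starRingEnd ℂ) (v ξ x) ∂μ)‖
          * (eLpNorm (u ξ) 1 μ).toReal)
        ≤ ℓ ^ 2 * (μ Set.univ).toReal ^ (1 / 2 : ℝ) * ‖f‖ * ‖g‖ ∧
      ∃ F : Lp ℂ 1 μ,
        HasSum (fun ξ =>
          ((∫ x, f x * (starRingEnd ℂ) (v ξ x) ∂μ) * (∫ x, g x * (starRingEnd ℂ) (v ξ x) ∂μ))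
            • uL1 (u ξ)) F ∧
        ‖F‖ ≤ ℓ ^ 2 * (μ Set.univ).toReal ^ (1 / 2 : ℝ) * ‖f‖ * ‖g‖ := by
  intro f g
  set a : ι → ℝ := fun ξ => ‖∫ x, f x * (starRingEnd ℂ) (v ξ x) ∂μ‖ with ha
  set b : ι → ℝ := fun ξ => ‖∫ x, g x * (starRingEnd ℂ) (v ξ x) ∂μ‖ with hb
  set W : ι → ℝ := fun ξ => (eLpNorm (u ξ) 1 μ).toReal with hW
  set C : ℝ := (μ Set.univ).toReal ^ (1 / 2 : ℝ) with hC
  have hC0 : 0 ≤ C := Real.rpow_nonneg ENNReal.toReal_nonneg _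
  have ha0 : ∀ ξ, 0 ≤ a ξ := fun ξ => norm_nonneg _
  have hb0 : ∀ ξ, 0 ≤ b ξ := fun ξ => norm_nonneg _
  have hW0 : ∀ ξ, 0 ≤ W ξ := fun ξ => ENNReal.toReal_nonneg
  -- bound on W
  have hW_le : ∀ ξ, W ξ ≤ C := by
    intro ξ
    have h2 : eLpNorm (u ξ) 2 μ = 1 := by
      have := hu ξ
      rw [Lp.norm_def] at this
      have hne : eLpNorm (u ξ) 2 μ ≠ ∞ := Lp.eLpNorm_ne_top (u ξ)
      rw [← ENNReal.ofReal_toReal hne, this]; simp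
    have h1 : eLpNorm (u ξ) 1 μ ≤
        eLpNorm (u ξ) 2 μ * μ Set.univ ^ (1 / (1 : ℝ≥0∞).toReal - 1 / (2 : ℝ≥0∞).toReal) :=
      eLpNorm_le_eLpNorm_mul_rpow_measure_univ (by norm_num)
        (Lp.aestronglyMeasurable (u ξ))
    rw [h2, one_mul] at h1
    have hexp : (1 / (1 : ℝ≥0∞).toReal - 1 / (2 : ℝ≥0∞).toReal) = (1 / 2 : ℝ) := by
      norm_num
    rw [hexp] at h1
    have hfin : μ Set.univ ^ (1 / 2 : ℝ) ≠ ∞ :=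
      ENNReal.rpow_ne_top_of_nonneg (by norm_num) (measure_ne_top μ _)
    calc W ξ ≤ (μ Set.univ ^ (1 / 2 : ℝ)).toReal := ENNReal.toReal_mono hfin h1
      _ = C := by rw [hC, ENNReal.toReal_rpow]
  -- Bessel bounds
  obtain ⟨hfs, hfb⟩ := hbessel f
  obtain ⟨hgs, hgb⟩ := hbessel g
  -- partial sum Cauchy-Schwarz
  have hab : ∀ s : Finset ι, ∑ ξ ∈ s, a ξ * b ξ ≤ ℓ ^ 2 * ‖f‖ * ‖g‖ := by
    intro s
    have hA : ∑ ξ ∈ s, a ξ ^ 2 ≤ ℓ ^ 2 * ‖f‖ ^ 2 := le_trans (Summable.sum_le_tsum s (fun ξ _ => sq_nonneg _) hfs) hfb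
    have hB : ∑ ξ ∈ s, b ξ ^ 2 ≤ ℓ ^ 2 * ‖g‖ ^ 2 := le_trans (Summable.sum_le_tsum s (fun ξ _ => sq_nonneg _) hgs) hgb
    have hcs : (∑ ξ ∈ s, a ξ * b ξ) ^ 2 ≤ (∑ ξ ∈ s, a ξ ^ 2) * ∑ ξ ∈ s, b ξ ^ 2 :=
      Finset.sum_mul_sq_le_sq_mul_sq s a b
    have hsq : (∑ ξ ∈ s, a ξ * b ξ) ^ 2 ≤ (ℓ ^ 2 * ‖f‖ * ‖g‖) ^ 2 := by
      calc (∑ ξ ∈ s, a ξ * b ξ) ^ 2 ≤ (∑ ξ ∈ s, a ξ ^ 2) * ∑ ξ ∈ s, b ξ ^ 2 := hcs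
        _ ≤ (ℓ ^ 2 * ‖f‖ ^ 2) * (ℓ ^ 2 * ‖g‖ ^ 2) := by
            apply mul_le_mul hA hB (Finset.sum_nonneg fun ξ _ => sq_nonneg _)
            positivity
        _ = (ℓ ^ 2 * ‖f‖ * ‖g‖) ^ 2 := by ring
    have h0 : 0 ≤ ∑ ξ ∈ s, a ξ * b ξ :=
      Finset.sum_nonneg fun ξ _ => mul_nonneg (ha0 ξ) (hb0 ξ)
    have h1 : 0 ≤ ℓ ^ 2 * ‖f‖ * ‖g‖ := by positivity
    nlinarith [hsq]
  -- partial sums of full terms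
  have hsum_le : ∀ s : Finset ι, ∑ ξ ∈ s, a ξ * b ξ * W ξ ≤ ℓ ^ 2 * C * ‖f‖ * ‖g‖ := by
    intro s
    calc ∑ ξ ∈ s, a ξ * b ξ * W ξ ≤ ∑ ξ ∈ s, a ξ * b ξ * C := by
          apply Finset.sum_le_sum
          intro ξ _
          exact mul_le_mul_of_nonneg_left (hW_le ξ) (mul_nonneg (ha0 ξ) (hb0 ξ))
      _ = (∑ ξ ∈ s, a ξ * b ξ) * C := by rw [← Finset.sum_mul]
      _ ≤ (ℓ ^ 2 * ‖f‖ * ‖g‖) * C := mul_le_mul_of_nonneg_right (hab s) hC0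
      _ = ℓ ^ 2 * C * ‖f‖ * ‖g‖ := by ring
  have heq : (fun ξ =>
      ‖(∫ x, f x * (starRingEnd ℂ) (v ξ x) ∂μ) * (∫ x, g x * (starRingEnd ℂ) (v ξ x) ∂μ)‖
        * (eLpNorm (u ξ) 1 μ).toReal) = fun ξ => a ξ * b ξ * W ξ := by
    funext ξ; rw [norm_mul]
  have hsummable : Summable (fun ξ => a ξ * b ξ * W ξ) :=
    summable_of_sum_le (fun ξ => mul_nonneg (mul_nonneg (ha0 ξ) (hb0 ξ)) (hW0 ξ)) hsum_le
  have htsum : ∑' ξ, a ξ * b ξ * W ξ ≤ ℓ ^ 2 * C * ‖f‖ * ‖g‖ :=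
    Summable.tsum_le_of_sum_le hsummable hsum_le
  refine ⟨heq ▸ hsummable, heq ▸ htsum, ?_⟩
  -- L¹ part
  set T : ι → Lp ℂ 1 μ := fun ξ =>
    ((∫ x, f x * (starRingEnd ℂ) (v ξ x) ∂μ) * (∫ x, g x * (starRingEnd ℂ) (v ξ x) ∂μ))
      • uL1 (u ξ) with hT
  have hnormT : ∀ ξ, ‖T ξ‖ = a ξ * b ξ * W ξ := by
    intro ξ
    rw [hT]
    simp only [norm_smul, norm_mul]
    congr 1
    exact Lp.norm_toLp _ ((Lp.memLp (u ξ)).mono_exponent (by norm_num))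
  have hTnorm_summable : Summable (fun ξ => ‖T ξ‖) := by
    simpa only [hnormT] using hsummable
  have hTsummable : Summable T := Summable.of_norm hTnorm_summable
  refine ⟨∑' ξ, T ξ, hTsummable.hasSum, ?_⟩
  calc ‖∑' ξ, T ξ‖ ≤ ∑' ξ, ‖T ξ‖ := norm_tsum_le_tsum_norm hTnorm_summable
    _ = ∑' ξ, a ξ * b ξ * W ξ := by simp only [hnormT]
    _ ≤ ℓ ^ 2 * C * ‖f‖ * ‖g‖ := htsum
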